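/- Define C : ℕ → ℝ by C(t) = (1/3^(t+1))·[ 2/((2^(t+2)−2)·(2^(t+2)−3)) + 4·2^t/((t+2)·(t+1)) + ∑_{i=0}^{t−1} 4·3^i/((2^(t−i+1)−2)·(2^(t−i+1)−3)) + ∑_{j=2}^{t+1} 4·2^(j−2)·3^(t−j+1)/(j·(j−1)) ]. Then the sequence C(t) converges as t → ∞, and its limit is positive. -/

import Mathlib

open Finset Filter

noncomputable def f3 (k : ℕ) : ℝ :=
  4 / (3 ^ (k + 2) * ((2 ^ (k + 2) - 2) * (2 ^ (k + 2) - 3)))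

noncomputable def f4 (k : ℕ) : ℝ :=
  4 * 2 ^ k / (3 ^ (k + 2) * (((k : ℝ) + 2) * ((k : ℝ) + 1)))

lemma four_le_pow (k : ℕ) : (4 : ℝ) ≤ 2 ^ (k + 2) := by
  calc (4 : ℝ) = 2 ^ 2 := by norm_num
  _ ≤ 2 ^ (k + 2) := by
      apply pow_le_pow_right₀ (by norm_num)
      omega

lemma denom_pos (k : ℕ) : (0 : ℝ) < (2 ^ (k + 2) - 2) * (2 ^ (k + 2) - 3) := by
  have h := four_le_pow k
  have h1 : (0:ℝ) < 2 ^ (k + 2) - 2 := by linarith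
  have h2 : (0:ℝ) < 2 ^ (k + 2) - 3 := by linarith
  positivity

lemma f3_nonneg (k : ℕ) : 0 ≤ f3 k := by
  unfold f3
  have h := denom_pos k
  positivity

lemma f4_nonneg (k : ℕ) : 0 ≤ f4 k := by
  unfold f4; positivity

lemma f3_le (k : ℕ) : f3 k ≤ (1 / 3 : ℝ) ^ k := by
  unfold f3
  have h := four_le_pow k
  have h1 : (2:ℝ) ≤ 2 ^ (k + 2) - 2 := by linarith
  have h2 : (1:ℝ) ≤ 2 ^ (k + 2) - 3 := by linarith
  have h3 : (2:ℝ) ≤ (2 ^ (k + 2) - 2) * (2 ^ (k + 2) - 3) := by nlinarith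
  have hp : (0:ℝ) < 3 ^ (k + 2) := by positivity
  rw [div_le_iff₀ (by nlinarith)]
  have : (1 / 3 : ℝ) ^ k * 3 ^ (k + 2) = 9 := by
    rw [div_pow, pow_add]
    field_simp
    norm_num
  calc (4:ℝ) ≤ (1/3:ℝ)^k * 3^(k+2) * 2 := by rw [this]; norm_num
  _ ≤ (1/3:ℝ)^k * (3^(k+2) * ((2^(k+2) - 2) * (2^(k+2) - 3))) := by
      have hq : (0:ℝ) ≤ (1/3:ℝ)^k := by positivity
      nlinarith [mul_le_mul_of_nonneg_left (mul_le_mul_of_nonneg_left h3 (le_of_lt hp)) hq]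

lemma f4_le (k : ℕ) : f4 k ≤ (2 / 3 : ℝ) ^ k := by
  unfold f4
  have h1 : (2:ℝ) ≤ ((k:ℝ) + 2) * ((k:ℝ) + 1) := by nlinarith [Nat.cast_nonneg (α := ℝ) k]
  have hp : (0:ℝ) < 3 ^ (k + 2) := by positivity
  rw [div_le_iff₀ (by nlinarith)]
  have key : (2/3:ℝ)^k * 3^(k+2) = 2^k * 9 := by
    rw [div_pow, pow_add]; field_simp; ring
  calc (4:ℝ) * 2^k ≤ (2^k * 9) * 2 := by nlinarith [pow_pos (by norm_num : (0:ℝ) < 2) k]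
  _ = (2/3:ℝ)^k * 3^(k+2) * 2 := by rw [key]
  _ ≤ (2/3:ℝ)^k * (3^(k+2) * (((k:ℝ)+2) * ((k:ℝ)+1))) := by
      have hq : (0:ℝ) ≤ (2/3:ℝ)^k := by positivity
      nlinarith [mul_le_mul_of_nonneg_left (mul_le_mul_of_nonneg_left h1 (le_of_lt hp)) hq]

lemma f3_summable : Summable f3 :=
  Summable.of_nonneg_of_le f3_nonneg f3_le
    (summable_geometric_of_lt_one (by norm_num) (by norm_num))

lemma f4_summable : Summable f4 :=
  Summable.of_nonneg_of_le f4_nonneg f4_le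
    (summable_geometric_of_lt_one (by norm_num) (by norm_num))

theorem clustering_coefficient_converges_pos :
    ∃ L : ℝ, Filter.Tendsto
      (fun t : ℕ => (1 / 3 ^ (t + 1) : ℝ) *
        (2 / ((2 ^ (t + 2) - 2) * (2 ^ (t + 2) - 3))
          + 4 * 2 ^ t / (((t : ℝ) + 2) * ((t : ℝ) + 1))
          + ∑ i ∈ Finset.range t,
              4 * 3 ^ i / ((2 ^ (t - i + 1) - 2) * (2 ^ (t - i + 1) - 3))
          + ∑ j ∈ Finset.Icc 2 (t + 1),
              4 * 2 ^ (j - 2) * 3 ^ (t + 1 - j) / ((j : ℝ) * ((j : ℝ) - 1))))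
      Filter.atTop (nhds L) ∧ 0 < L := by
  set L1 := ∑' k, f3 k with hL1
  set L2 := ∑' k, f4 k with hL2
  refine ⟨L1 + L2, ?_, ?_⟩
  · -- rewrite each term
    have key : ∀ t : ℕ, (1 / 3 ^ (t + 1) : ℝ) *
        (2 / ((2 ^ (t + 2) - 2) * (2 ^ (t + 2) - 3))
          + 4 * 2 ^ t / (((t : ℝ) + 2) * ((t : ℝ) + 1))
          + ∑ i ∈ Finset.range t,
              4 * 3 ^ i / ((2 ^ (t - i + 1) - 2) * (2 ^ (t - i + 1) - 3))
          + ∑ j ∈ Finset.Icc 2 (t + 1),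
              4 * 2 ^ (j - 2) * 3 ^ (t + 1 - j) / ((j : ℝ) * ((j : ℝ) - 1)))
        = (1 / 3 ^ (t + 1) : ℝ) * (2 / ((2 ^ (t + 2) - 2) * (2 ^ (t + 2) - 3)))
          + (1 / 3 ^ (t + 1) : ℝ) * (4 * 2 ^ t / (((t : ℝ) + 2) * ((t : ℝ) + 1)))
          + (∑ k ∈ Finset.range t, f3 k) + (∑ k ∈ Finset.range t, f4 k) := by
      intro t
      rw [mul_add, mul_add, mul_add]
      congr 1
      · congr 1
        -- first sum
        rw [Finset.mul_sum, ← Finset.sum_range_reflect]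
        refine Finset.sum_congr rfl fun j hj => ?_
        rw [Finset.mem_range] at hj
        have e1 : t - (t - 1 - j) + 1 = j + 2 := by omega
        have e2 : (t - 1 - j) + (j + 2) = t + 1 := by omega
        rw [e1]
        unfold f3
        have hpow : (3:ℝ) ^ (t + 1) = 3 ^ (t - 1 - j) * 3 ^ (j + 2) := by
          rw [← pow_add, e2]
        have hd := denom_pos j
        have h3 : (0:ℝ) < 3 ^ (t - 1 - j) := by positivity
        have h4 : (0:ℝ) < 3 ^ (j + 2) := by positivity
        rw [hpow]
        field_simp
      · -- second sum
        rw [Finset.mul_sum]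
        rw [show Finset.Icc 2 (t + 1) = Finset.Ico 2 (t + 2) by exact (Finset.Ico_add_one_right_eq_Icc 2 (t + 1)).symm]
        rw [Finset.sum_Ico_eq_sum_range]
        rw [show t + 2 - 2 = t from rfl]
        refine Finset.sum_congr rfl fun k hk => ?_
        rw [Finset.mem_range] at hk
        have e1 : 2 + k - 2 = k := by omega
        have e2 : t + 1 - (2 + k) = t - 1 - k := by omega
        have e3 : (t - 1 - k) + (k + 2) = t + 1 := by omega
        rw [e1, e2]
        unfold f4
        have hpow : (3:ℝ) ^ (t + 1) = 3 ^ (t - 1 - k) * 3 ^ (k + 2) := by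
          rw [← pow_add, e3]
        have h3 : (0:ℝ) < 3 ^ (t - 1 - k) := by positivity
        have h4 : (0:ℝ) < 3 ^ (k + 2) := by positivity
        have hc : ((2 + k : ℕ) : ℝ) = (k : ℝ) + 2 := by push_cast; ring
        rw [hc, hpow]
        have hk1 : (0:ℝ) < (k:ℝ) + 1 := by positivity
        have hk2 : (0:ℝ) < (k:ℝ) + 2 := by positivity
        have : ((k : ℝ) + 2) - 1 = (k:ℝ) + 1 := by ring
        rw [this]
        field_simp
    simp only [key]
    have h0 : (L1 + L2) = 0 + 0 + L1 + L2 := by ring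
    rw [h0]
    apply Tendsto.add
    apply Tendsto.add
    apply Tendsto.add
    · -- g1 → 0
      have hb : Tendsto (fun t : ℕ => (1/3:ℝ) ^ t) atTop (nhds 0) :=
        tendsto_pow_atTop_nhds_zero_of_lt_one (by norm_num) (by norm_num)
      refine squeeze_zero (fun t => ?_) (fun t => ?_) hb
      · have hd := denom_pos t
        positivity
      · have h := four_le_pow t
        have h1 : (2:ℝ) ≤ 2 ^ (t + 2) - 2 := by linarith
        have h2 : (1:ℝ) ≤ 2 ^ (t + 2) - 3 := by linarith
        have h3 : (1:ℝ) ≤ (2 ^ (t + 2) - 2) * (2 ^ (t + 2) - 3) := by nlinarith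
        have hfrac : 2 / ((2 ^ (t + 2) - 2) * (2 ^ (t + 2) - 3)) ≤ (2:ℝ) := by
          rw [div_le_iff₀ (by linarith)]; nlinarith
        have hp : (0:ℝ) < 3 ^ (t + 1) := by positivity
        calc (1 / 3 ^ (t + 1) : ℝ) * (2 / ((2 ^ (t + 2) - 2) * (2 ^ (t + 2) - 3)))
            ≤ (1 / 3 ^ (t + 1) : ℝ) * 2 := by
              apply mul_le_mul_of_nonneg_left hfrac; positivity
        _ ≤ (1/3:ℝ)^t := by
              rw [div_pow, one_pow, pow_succ, div_mul_eq_mul_div, one_mul]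
              rw [div_le_div_iff₀ (by positivity) (by positivity)]
              nlinarith [pow_pos (by norm_num : (0:ℝ) < 3) t]
    · -- g2 → 0
      have hb : Tendsto (fun t : ℕ => 2 * (2/3:ℝ) ^ t) atTop (nhds 0) := by
        have := (tendsto_pow_atTop_nhds_zero_of_lt_one
          (by norm_num : (0:ℝ) ≤ 2/3) (by norm_num)).const_mul (2:ℝ)
        simpa using this
      refine squeeze_zero (fun t => ?_) (fun t => ?_) hb
      · positivity
      · have h1 : (2:ℝ) ≤ ((t:ℝ) + 2) * ((t:ℝ) + 1) := by
          nlinarith [Nat.cast_nonneg (α := ℝ) t]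
        have hp3 : (0:ℝ) < 3 ^ (t + 1) := by positivity
        have hp2 : (0:ℝ) < (2:ℝ) ^ t := by positivity
        have hfrac : 4 * 2 ^ t / (((t:ℝ) + 2) * ((t:ℝ) + 1)) ≤ 2 * 2 ^ t := by
          rw [div_le_iff₀ (by linarith)]
          nlinarith
        calc (1 / 3 ^ (t + 1) : ℝ) * (4 * 2 ^ t / (((t:ℝ) + 2) * ((t:ℝ) + 1)))
            ≤ (1 / 3 ^ (t + 1) : ℝ) * (2 * 2 ^ t) := by
              apply mul_le_mul_of_nonneg_left hfrac; positivity
        _ ≤ 2 * (2/3:ℝ)^t := by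
              have hr : 2 * (2/3:ℝ)^t = 2 * 2^t / 3^t := by rw [div_pow]; ring
              rw [hr, div_mul_eq_mul_div, one_mul,
                div_le_div_iff₀ (by positivity) (by positivity), pow_succ]
              nlinarith [mul_pos (pow_pos (by norm_num : (0:ℝ) < 2) t)
                (pow_pos (by norm_num : (0:ℝ) < 3) t)]
    · exact f3_summable.hasSum.tendsto_sum_nat
    · exact f4_summable.hasSum.tendsto_sum_nat
  · -- positivity of limit
    have h1 : 0 ≤ L1 := tsum_nonneg f3_nonneg
    have h2 : 0 < L2 := by
      apply Summable.tsum_pos f4_summable f4_nonneg 0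
      unfold f4; norm_num
    linarith
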